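/- The canonical structure ⟨W_can, R_can, {v_Δ}_{Δ∈W_can}⟩ is a swap Kripke model for DmbC (in particular, R_can is serial and each v_Δ satisfies all the swap-valuation conditions), and for every formula φ and every Δ ∈ W_can: v_Δ(φ) ∈ D if and only if φ ∈ Δ. -/

import Mathlib

/-- Formulas over the signature Σ = {∧, ∨, →, ¬, ∘, O}, with countably many
propositional variables. -/
inductive Form : Type
  | var : ℕ → Form
  | and : Form → Form → Form
  | or : Form → Form → Form
  | imp : Form → Form → Form
  | neg : Form → Form
  | circ : Form → Form
  | obl : Form → Form

namespace Form
/-- ⊥_α := (α ∧ ¬α) ∧ ∘α -/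
def bot (α : Form) : Form := (α.and α.neg).and α.circ
end Form

/-- Theorems of the Hilbert calculus DmbC: CPL⁺ axioms, (EM), (bc), (O-K), (O-E),
with rules Modus Ponens and O-necessitation. -/
inductive ThmDmbC : Form → Prop
  | A1 (α β : Form) : ThmDmbC (α.imp (β.imp α))
  | A2 (α β γ : Form) : ThmDmbC ((α.imp (β.imp γ)).imp ((α.imp β).imp (α.imp γ)))
  | A3 (α β : Form) : ThmDmbC (α.imp (β.imp (α.and β)))
  | A4 (α β : Form) : ThmDmbC ((α.and β).imp α)
  | A5 (α β : Form) : ThmDmbC ((α.and β).imp β)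
  | A6 (α β : Form) : ThmDmbC (α.imp (α.or β))
  | A7 (α β : Form) : ThmDmbC (β.imp (α.or β))
  | A8 (α β γ : Form) : ThmDmbC ((α.imp γ).imp ((β.imp γ).imp ((α.or β).imp γ)))
  | A9 (α β : Form) : ThmDmbC (((α.imp β).imp α).imp α)
  | EM (α : Form) : ThmDmbC (α.or α.neg)
  | bc (α β : Form) : ThmDmbC (α.circ.imp (α.imp (α.neg.imp β)))
  | OK (α β : Form) : ThmDmbC ((α.imp β).obl.imp (α.obl.imp β.obl))
  | OE (α : Form) : ThmDmbC (α.bot.obl.imp α.bot)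
  | mp {α β : Form} : ThmDmbC (α.imp β) → ThmDmbC α → ThmDmbC β
  | nec {α : Form} : ThmDmbC α → ThmDmbC α.obl

/-- conj γ [γ₂,…,γ_k] = γ ∧ γ₂ ∧ … ∧ γ_k -/
def conj (γ : Form) : List Form → Form
  | [] => γ
  | δ :: l => γ.and (conj δ l)

/-- Γ ⊢_DmbC φ iff ⊢ φ or ⊢ (γ₁ ∧ … ∧ γ_k) → φ for some γ₁,…,γ_k ∈ Γ, k ≥ 1. -/
def DerivDmbC (Γ : Set Form) (φ : Form) : Prop :=
  ThmDmbC φ ∨ ∃ (γ : Form) (l : List Form),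
    (∀ δ ∈ γ :: l, δ ∈ Γ) ∧ ThmDmbC ((conj γ l).imp φ)

/-- The three snapshots T = (1,0), t = (1,1), F = (0,1). -/
inductive SV : Type
  | T | t | F
deriving DecidableEq

/-- First coordinate of a snapshot. -/
def SV.p1 : SV → Bool
  | .T => true | .t => true | .F => false

/-- Second coordinate of a snapshot. -/
def SV.p2 : SV → Bool
  | .T => false | .t => true | .F => true

/-- Designated values: D = {T, t}, i.e. first coordinate is 1. -/
def SV.desig (a : SV) : Prop := a.p1 = true

/-- Swap Kripke model conditions for DmbC on a serial frame (W,R) with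
valuations v_w : Form → SV. -/
structure IsModelDmbC {W : Type} (R : W → W → Prop) (v : W → Form → SV) : Prop where
  serial : ∀ w, ∃ w', R w w'
  and_ : ∀ w α β, (v w (α.and β)).p1 = ((v w α).p1 && (v w β).p1)
  or_ : ∀ w α β, (v w (α.or β)).p1 = ((v w α).p1 || (v w β).p1)
  imp_ : ∀ w α β, (v w (α.imp β)).p1 = (!(v w α).p1 || (v w β).p1)
  neg_ : ∀ w α, (v w α.neg).p1 = (v w α).p2
  circ_ : ∀ w α, (v w α.circ).p1 ≤ !((v w α).p1 && (v w α).p2)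
  obl_ : ∀ w α, ((v w α.obl).p1 = true ↔ ∀ w', R w w' → (v w' α).p1 = true)

/-- Γ ⊨_DmbC φ : semantic consequence over all swap Kripke models for DmbC. -/
def SemDmbC (Γ : Set Form) (φ : Form) : Prop :=
  ∀ (W : Type) (R : W → W → Prop) (v : W → Form → SV), Nonempty W →
    IsModelDmbC R v → ∀ w : W, (∀ γ ∈ Γ, (v w γ).desig) → (v w φ).desig

/-- Δ is ψ-saturated in DmbC: Δ ⊬ ψ and Δ ∪ {φ} ⊢ ψ for every φ ∉ Δ. -/
def Saturated (Δ : Set Form) (ψ : Form) : Prop :=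
  ¬ DerivDmbC Δ ψ ∧ ∀ φ : Form, φ ∉ Δ → DerivDmbC (insert φ Δ) ψ

/-- The canonical worlds: the sets that are ψ-saturated in DmbC for some ψ. -/
def Wcan : Set (Set Form) := {Δ | ∃ ψ, Saturated Δ ψ}

/-- The canonical accessibility relation: Δ R_can Θ iff Den(Δ) ⊆ Θ. -/
def Rcan (Δ Θ : Set Form) : Prop := ∀ φ : Form, φ.obl ∈ Δ → φ ∈ Θ

/- The canonical valuation: v_Δ(α) = T if α ∈ Δ, ¬α ∉ Δ; t if α, ¬α ∈ Δ;
F if α ∉ Δ (in which case ¬α ∈ Δ for saturated Δ). -/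
open Classical in
noncomputable def canVal (Δ : Set Form) (α : Form) : SV :=
  if α ∈ Δ then (if α.neg ∈ Δ then SV.t else SV.T) else SV.F


/- ———————————————————— Auxiliary development ———————————————————— -/

deriving instance DecidableEq for Form

section Aux
open Classical

/-- Natural-deduction style derivability from a finite list of hypotheses. -/
inductive Der : List Form → Form → Prop
  | ax {l : List Form} {φ : Form} : φ ∈ l → Der l φ
  | thm {l : List Form} {φ : Form} : ThmDmbC φ → Der l φ
  | mp {l : List Form} {φ χ : Form} : Der l (χ.imp φ) → Der l χ → Der l φ

theorem thm_id (α : Form) : ThmDmbC (α.imp α) :=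
  .mp (.mp (.A2 α (α.imp α) α) (.A1 α (α.imp α))) (.A1 α α)

theorem Der.ded {l : List Form} {α φ : Form} (h : Der (α :: l) φ) : Der l (α.imp φ) := by
  induction h with
  | ax h =>
      rcases List.mem_cons.1 h with h | h
      · subst h; exact .thm (thm_id _)
      · exact .mp (.thm (.A1 _ _)) (.ax h)
  | thm h => exact .mp (.thm (.A1 _ _)) (.thm h)
  | mp _ _ ih1 ih2 => exact .mp (.mp (.thm (.A2 _ _ _)) ih1) ih2

theorem Der.nil {φ : Form} (h : Der [] φ) : ThmDmbC φ := by
  induction h with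
  | ax h => exact absurd h List.not_mem_nil
  | thm h => exact h
  | mp _ _ ih1 ih2 => exact ih1.mp ih2

theorem Der.subst {L M : List Form} {φ : Form} (h : Der L φ)
    (hm : ∀ δ ∈ L, Der M δ) : Der M φ := by
  induction h with
  | ax h => exact hm _ h
  | thm h => exact .thm h
  | mp _ _ ih1 ih2 => exact .mp ih1 ih2

theorem Der.weak {L M : List Form} {φ : Form} (h : Der L φ)
    (hm : ∀ δ ∈ L, δ ∈ M) : Der M φ :=
  h.subst fun δ hδ => .ax (hm δ hδ)

theorem der_conj_intro : ∀ (l : List Form) (γ : Form) {L : List Form},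
    (∀ δ ∈ γ :: l, δ ∈ L) → Der L (conj γ l)
  | [], γ, _, h => .ax (h γ (by simp))
  | δ :: t, γ, L, h => by
      have h1 : Der L γ := .ax (h γ (by simp))
      have h2 : Der L (conj δ t) :=
        der_conj_intro t δ (fun x hx => h x (by
          rcases List.mem_cons.1 hx with rfl | hx <;> simp [hx]))
      exact .mp (.mp (.thm (.A3 _ _)) h1) h2

theorem der_conj_elim : ∀ (l : List Form) (γ δ : Form), δ ∈ γ :: l → Der [conj γ l] δ
  | [], γ, δ, h => by
      have : δ = γ := by simpa using h
      subst this; exact .ax (by simp [conj])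
  | κ :: t, γ, δ, h => by
      have hx : Der [conj γ (κ :: t)] (γ.and (conj κ t)) := .ax (by simp [conj])
      rcases List.mem_cons.1 h with rfl | h
      · exact .mp (.thm (.A4 δ (conj κ t))) hx
      · have ih : Der [conj κ t] δ := der_conj_elim t κ δ h
        have h2 : Der [conj γ (κ :: t)] (conj κ t) :=
          .mp (.thm (.A5 γ (conj κ t))) hx
        exact .mp (.thm ih.ded.nil) h2

theorem deriv_iff {Γ : Set Form} {φ : Form} :
    DerivDmbC Γ φ ↔ ∃ L : List Form, (∀ δ ∈ L, δ ∈ Γ) ∧ Der L φ := by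
  constructor
  · rintro (h | ⟨γ, l, hm, ht⟩)
    · exact ⟨[], by simp, .thm h⟩
    · exact ⟨γ :: l, hm, .mp (.thm ht) (der_conj_intro l γ (fun δ hδ => hδ))⟩
  · rintro ⟨L, hm, hd⟩
    match L, hm, hd with
    | [], _, hd => exact Or.inl hd.nil
    | γ :: l, hm, hd =>
      refine Or.inr ⟨γ, l, hm, ?_⟩
      have h1 : Der [conj γ l] φ := hd.subst (fun δ hδ => der_conj_elim l γ δ hδ)
      exact h1.ded.nil

theorem deriv_of_mem {Γ : Set Form} {φ : Form} (h : φ ∈ Γ) : DerivDmbC Γ φ :=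
  deriv_iff.2 ⟨[φ], by simpa using h, .ax (by simp)⟩

theorem deriv_thm {Γ : Set Form} {φ : Form} (h : ThmDmbC φ) : DerivDmbC Γ φ := Or.inl h

theorem deriv_mono {Γ Γ' : Set Form} {φ : Form} (hs : Γ ⊆ Γ') (h : DerivDmbC Γ φ) :
    DerivDmbC Γ' φ := by
  obtain ⟨L, hm, hd⟩ := deriv_iff.1 h
  exact deriv_iff.2 ⟨L, fun δ hδ => hs (hm δ hδ), hd⟩

theorem deriv_mp {Γ : Set Form} {α β : Form} (h1 : DerivDmbC Γ (α.imp β))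
    (h2 : DerivDmbC Γ α) : DerivDmbC Γ β := by
  obtain ⟨L1, hm1, hd1⟩ := deriv_iff.1 h1
  obtain ⟨L2, hm2, hd2⟩ := deriv_iff.1 h2
  refine deriv_iff.2 ⟨L1 ++ L2, ?_, ?_⟩
  · intro δ hδ
    rcases List.mem_append.1 hδ with h | h
    · exact hm1 δ h
    · exact hm2 δ h
  · exact .mp (hd1.weak (fun δ hδ => List.mem_append.2 (Or.inl hδ)))
      (hd2.weak (fun δ hδ => List.mem_append.2 (Or.inr hδ)))

theorem deriv_cut {Γ : Set Form} {φ ψ : Form} (h1 : DerivDmbC Γ φ)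
    (h2 : DerivDmbC (insert φ Γ) ψ) : DerivDmbC Γ ψ := by
  obtain ⟨L1, hm1, hd1⟩ := deriv_iff.1 h1
  obtain ⟨L2, hm2, hd2⟩ := deriv_iff.1 h2
  refine deriv_iff.2 ⟨L1 ++ L2.filter (fun δ => δ ≠ φ), ?_, ?_⟩
  · intro δ hδ
    rcases List.mem_append.1 hδ with h | h
    · exact hm1 δ h
    · have h' := List.mem_filter.1 h
      have hne : δ ≠ φ := by simpa using h'.2
      rcases Set.mem_insert_iff.1 (hm2 δ h'.1) with h'' | h''
      · exact absurd h'' hne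
      · exact h''
  · refine hd2.subst (fun δ hδ => ?_)
    by_cases hδφ : δ = φ
    · subst hδφ
      exact hd1.weak (fun x hx => List.mem_append.2 (Or.inl hx))
    · exact .ax (List.mem_append.2 (Or.inr (List.mem_filter.2 ⟨hδ, by simpa using hδφ⟩)))

theorem deriv_ded {Γ : Set Form} {α φ : Form} (h : DerivDmbC (insert α Γ) φ) :
    DerivDmbC Γ (α.imp φ) := by
  obtain ⟨L, hm, hd⟩ := deriv_iff.1 h
  set K : List Form := L.filter (fun δ => δ ≠ α) with hK
  have hd' : Der (α :: K) φ := by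
    refine hd.subst (fun δ hδ => ?_)
    by_cases hδα : δ = α
    · subst hδα; exact .ax (by simp)
    · exact .ax (List.mem_cons.2 (Or.inr (List.mem_filter.2 ⟨hδ, by simpa using hδα⟩)))
  refine deriv_iff.2 ⟨K, ?_, hd'.ded⟩
  intro δ hδ
  have h' := List.mem_filter.1 hδ
  have hne : δ ≠ α := by simpa using h'.2
  rcases Set.mem_insert_iff.1 (hm δ h'.1) with h'' | h''
  · exact absurd h'' hne
  · exact h''

/- Saturated set lemmas -/

theorem Saturated.closed {Δ : Set Form} {ψ φ : Form} (h : Saturated Δ ψ)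
    (hd : DerivDmbC Δ φ) : φ ∈ Δ := by
  by_contra hφ
  exact h.1 (deriv_cut hd (h.2 φ hφ))

theorem Saturated.thm_mem {Δ : Set Form} {ψ φ : Form} (h : Saturated Δ ψ)
    (ht : ThmDmbC φ) : φ ∈ Δ := h.closed (deriv_thm ht)

theorem Saturated.mp_mem {Δ : Set Form} {ψ α β : Form} (h : Saturated Δ ψ)
    (h1 : (α.imp β) ∈ Δ) (h2 : α ∈ Δ) : β ∈ Δ :=
  h.closed (deriv_mp (deriv_of_mem h1) (deriv_of_mem h2))

theorem Saturated.and_mem_iff {Δ : Set Form} {ψ α β : Form} (h : Saturated Δ ψ) :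
    (α.and β) ∈ Δ ↔ α ∈ Δ ∧ β ∈ Δ := by
  constructor
  · intro hm
    exact ⟨h.mp_mem (h.thm_mem (.A4 α β)) hm, h.mp_mem (h.thm_mem (.A5 α β)) hm⟩
  · rintro ⟨h1, h2⟩
    exact h.mp_mem (h.mp_mem (h.thm_mem (.A3 α β)) h1) h2

theorem Saturated.or_elim {Δ : Set Form} {ψ α β : Form} (h : Saturated Δ ψ)
    (hm : (α.or β) ∈ Δ) : α ∈ Δ ∨ β ∈ Δ := by
  by_contra hc
  push_neg at hc
  have d1 : DerivDmbC Δ (α.imp ψ) := deriv_ded (h.2 α hc.1)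
  have d2 : DerivDmbC Δ (β.imp ψ) := deriv_ded (h.2 β hc.2)
  have d3 : DerivDmbC Δ ((α.or β).imp ψ) :=
    deriv_mp (deriv_mp (deriv_thm (.A8 α β ψ)) d1) d2
  exact h.1 (deriv_mp d3 (deriv_of_mem hm))

theorem Saturated.or_mem_iff {Δ : Set Form} {ψ α β : Form} (h : Saturated Δ ψ) :
    (α.or β) ∈ Δ ↔ α ∈ Δ ∨ β ∈ Δ := by
  constructor
  · exact h.or_elim
  · rintro (h1 | h1)
    · exact h.mp_mem (h.thm_mem (.A6 α β)) h1
    · exact h.mp_mem (h.thm_mem (.A7 α β)) h1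

theorem Saturated.neg_mem_of_not_mem {Δ : Set Form} {ψ α : Form} (h : Saturated Δ ψ)
    (hα : α ∉ Δ) : α.neg ∈ Δ := by
  rcases h.or_elim (h.thm_mem (.EM α)) with h1 | h1
  · exact absurd h1 hα
  · exact h1

theorem peirce_aux (α β ψ : Form) :
    ThmDmbC (((α.imp β).imp ψ).imp ((α.imp ψ).imp ψ)) := by
  have hab : Der [α, ψ.imp β, α.imp ψ, (α.imp β).imp ψ] β := by
    have a1 : Der [α, ψ.imp β, α.imp ψ, (α.imp β).imp ψ] (ψ.imp β) := .ax (by simp)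
    have a2 : Der [α, ψ.imp β, α.imp ψ, (α.imp β).imp ψ] (α.imp ψ) := .ax (by simp)
    have a3 : Der [α, ψ.imp β, α.imp ψ, (α.imp β).imp ψ] α := .ax (by simp)
    exact .mp a1 (.mp a2 a3)
  have h1 : Der [ψ.imp β, α.imp ψ, (α.imp β).imp ψ] ψ := by
    have b1 : Der [ψ.imp β, α.imp ψ, (α.imp β).imp ψ] ((α.imp β).imp ψ) := .ax (by simp)
    exact .mp b1 hab.ded
  have h2 : Der [α.imp ψ, (α.imp β).imp ψ] ψ := .mp (.thm (.A9 ψ β)) h1.ded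
  exact h2.ded.ded.nil

theorem Saturated.imp_mem_of_not_mem {Δ : Set Form} {ψ α β : Form} (h : Saturated Δ ψ)
    (hα : α ∉ Δ) : (α.imp β) ∈ Δ := by
  by_contra hi
  have d1 : DerivDmbC Δ ((α.imp β).imp ψ) := deriv_ded (h.2 _ hi)
  have d2 : DerivDmbC Δ (α.imp ψ) := deriv_ded (h.2 α hα)
  exact h.1 (deriv_mp (deriv_mp (deriv_thm (peirce_aux α β ψ)) d1) d2)

theorem Saturated.imp_mem_iff {Δ : Set Form} {ψ α β : Form} (h : Saturated Δ ψ) :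
    (α.imp β) ∈ Δ ↔ (α ∉ Δ ∨ β ∈ Δ) := by
  constructor
  · intro hm
    by_cases hα : α ∈ Δ
    · exact Or.inr (h.mp_mem hm hα)
    · exact Or.inl hα
  · rintro (h1 | h1)
    · exact h.imp_mem_of_not_mem h1
    · exact h.mp_mem (h.thm_mem (.A1 β α)) h1

theorem Saturated.circ_nc {Δ : Set Form} {ψ α : Form} (h : Saturated Δ ψ)
    (hc : α.circ ∈ Δ) (h1 : α ∈ Δ) (h2 : α.neg ∈ Δ) : False :=
  h.1 (deriv_of_mem (h.mp_mem (h.mp_mem (h.mp_mem (h.thm_mem (.bc α ψ)) hc) h1) h2))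

/- O-necessitation lifted to conjunctions -/

theorem der_O_conj : ∀ (l : List Form) (γ : Form),
    Der ((γ :: l).map Form.obl) ((conj γ l).obl)
  | [], γ => .ax (by simp [conj])
  | κ :: t, γ => by
      have ih : Der ((κ :: t).map Form.obl) ((conj κ t).obl) := der_O_conj t κ
      have ih' : Der ((γ :: κ :: t).map Form.obl) ((conj κ t).obl) :=
        ih.weak (by intro δ hδ; simp at hδ ⊢; tauto)
      have a : Der ((γ :: κ :: t).map Form.obl)
          (γ.obl.imp ((conj κ t).imp (γ.and (conj κ t))).obl) :=
        .mp (.thm (.OK γ _)) (.thm (.nec (.A3 γ (conj κ t))))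
      have b : Der ((γ :: κ :: t).map Form.obl) (((conj κ t).imp (γ.and (conj κ t))).obl) :=
        .mp a (.ax (by simp))
      have c : Der ((γ :: κ :: t).map Form.obl)
          ((conj κ t).obl.imp (γ.and (conj κ t)).obl) :=
        .mp (.thm (.OK _ _)) b
      exact .mp c ih'

/-- If Den(Δ) derives α then Oα ∈ Δ, for Δ saturated. -/
theorem Saturated.obl_of_den_deriv {Δ : Set Form} {ψ α : Form} (h : Saturated Δ ψ)
    (hd : DerivDmbC {φ : Form | φ.obl ∈ Δ} α) : α.obl ∈ Δ := by
  rcases hd with ht | ⟨γ, l, hm, ht⟩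
  · exact h.thm_mem (.nec ht)
  · have e1 : ThmDmbC ((conj γ l).obl.imp α.obl) := .mp (.OK _ _) (.nec ht)
    have e2 : Der ((γ :: l).map Form.obl) α.obl := .mp (.thm e1) (der_O_conj l γ)
    refine h.closed (deriv_iff.2 ⟨(γ :: l).map Form.obl, ?_, e2⟩)
    intro δ hδ
    obtain ⟨x, hx, rfl⟩ := List.mem_map.1 hδ
    exact hm x hx

/- Lindenbaum -/

def encForm : Form → ℕ
  | .var n => Nat.pair 0 n
  | .and a b => Nat.pair 1 (Nat.pair (encForm a) (encForm b))
  | .or a b => Nat.pair 2 (Nat.pair (encForm a) (encForm b))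
  | .imp a b => Nat.pair 3 (Nat.pair (encForm a) (encForm b))
  | .neg a => Nat.pair 4 (encForm a)
  | .circ a => Nat.pair 5 (encForm a)
  | .obl a => Nat.pair 6 (encForm a)

theorem encForm_inj : Function.Injective encForm := by
  intro a
  induction a with
  | var n => intro b h; cases b <;> simp_all [encForm, Nat.pair_eq_pair]
  | and a1 a2 ih1 ih2 =>
      intro b h; cases b <;> simp [encForm, Nat.pair_eq_pair] at h
      rw [ih1 h.1, ih2 h.2]
  | or a1 a2 ih1 ih2 =>
      intro b h; cases b <;> simp [encForm, Nat.pair_eq_pair] at h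
      rw [ih1 h.1, ih2 h.2]
  | imp a1 a2 ih1 ih2 =>
      intro b h; cases b <;> simp [encForm, Nat.pair_eq_pair] at h
      rw [ih1 h.1, ih2 h.2]
  | neg a ih =>
      intro b h; cases b <;> simp [encForm, Nat.pair_eq_pair] at h
      rw [ih h]
  | circ a ih =>
      intro b h; cases b <;> simp [encForm, Nat.pair_eq_pair] at h
      rw [ih h]
  | obl a ih =>
      intro b h; cases b <;> simp [encForm, Nat.pair_eq_pair] at h
      rw [ih h]

instance : Countable Form := encForm_inj.countable
instance : Nonempty Form := ⟨.var 0⟩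

theorem lindenbaum {Γ : Set Form} {ψ : Form} (h : ¬ DerivDmbC Γ ψ) :
    ∃ Δ : Set Form, Γ ⊆ Δ ∧ Saturated Δ ψ := by
  obtain ⟨f, hf⟩ := exists_surjective_nat Form
  let D : ℕ → Set Form := fun n => Nat.rec Γ
    (fun n Dn => if DerivDmbC (insert (f n) Dn) ψ then Dn else insert (f n) Dn) n
  have hstep : ∀ n, D (n + 1) =
      if DerivDmbC (insert (f n) (D n)) ψ then D n else insert (f n) (D n) := fun n => rfl
  have hmono : ∀ n, D n ⊆ D (n + 1) := by
    intro n
    rw [hstep]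
    split_ifs
    · exact subset_rfl
    · exact Set.subset_insert _ _
  have hmono' : ∀ m n, m ≤ n → D m ⊆ D n := by
    intro m n hmn
    induction hmn with
    | refl => exact subset_rfl
    | step _ ih => exact subset_trans ih (hmono _)
  have hcons : ∀ n, ¬ DerivDmbC (D n) ψ := by
    intro n
    induction n with
    | zero => exact h
    | succ n ih =>
        rw [hstep]
        split_ifs with hc
        · exact ih
        · exact hc
  set Δ : Set Form := {φ | ∃ n, φ ∈ D n} with hΔ
  have hsub : ∀ n, D n ⊆ Δ := fun n φ hφ => ⟨n, hφ⟩
  have hfin : ∀ L : List Form, (∀ δ ∈ L, δ ∈ Δ) → ∃ N, ∀ δ ∈ L, δ ∈ D N := by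
    intro L
    induction L with
    | nil => intro _; exact ⟨0, by simp⟩
    | cons κ t ih =>
        intro hm
        obtain ⟨N1, hN1⟩ := ih (fun δ hδ => hm δ (by simp [hδ]))
        obtain ⟨N2, hN2⟩ := hm κ (by simp)
        refine ⟨max N1 N2, ?_⟩
        intro δ hδ
        rcases List.mem_cons.1 hδ with rfl | hδ
        · exact hmono' N2 _ (le_max_right _ _) hN2
        · exact hmono' N1 _ (le_max_left _ _) (hN1 δ hδ)
  refine ⟨Δ, hsub 0, ?_, ?_⟩
  · intro hd
    obtain ⟨L, hm, hder⟩ := deriv_iff.1 hd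
    obtain ⟨N, hN⟩ := hfin L hm
    exact hcons N (deriv_iff.2 ⟨L, hN, hder⟩)
  · intro φ hφ
    obtain ⟨n, rfl⟩ := hf φ
    have hnot : f n ∉ D (n + 1) := fun hc => hφ (hsub (n + 1) hc)
    have hder : DerivDmbC (insert (f n) (D n)) ψ := by
      by_contra hc
      apply hnot
      rw [hstep, if_neg hc]
      exact Set.mem_insert _ _
    exact deriv_mono (Set.insert_subset_insert (hsub n)) hder

/- Soundness w.r.t. a trivial Boolean valuation, for nonemptiness of Wcan. -/

def bval : Form → Bool
  | .var _ => false
  | .and a b => bval a && bval b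
  | .or a b => bval a || bval b
  | .imp a b => !bval a || bval b
  | .neg a => !bval a
  | .circ _ => true
  | .obl a => bval a

theorem bval_sound {φ : Form} (h : ThmDmbC φ) : bval φ = true := by
  induction h with
  | A1 α β => simp only [bval]; cases bval α <;> cases bval β <;> simp
  | A2 α β γ => simp only [bval]; cases bval α <;> cases bval β <;> cases bval γ <;> simp
  | A3 α β => simp only [bval]; cases bval α <;> cases bval β <;> simp
  | A4 α β => simp only [bval]; cases bval α <;> cases bval β <;> simp
  | A5 α β => simp only [bval]; cases bval α <;> cases bval β <;> simp
  | A6 α β => simp only [bval]; cases bval α <;> cases bval β <;> simp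
  | A7 α β => simp only [bval]; cases bval α <;> cases bval β <;> simp
  | A8 α β γ => simp only [bval]; cases bval α <;> cases bval β <;> cases bval γ <;> simp
  | A9 α β => simp only [bval]; cases bval α <;> cases bval β <;> simp
  | EM α => simp only [bval]; cases bval α <;> simp
  | bc α β => simp only [bval]; cases bval α <;> cases bval β <;> simp
  | OK α β => simp only [bval]; cases bval α <;> cases bval β <;> simp
  | OE α => simp only [bval, Form.bot]; cases bval α <;> simp
  | mp _ _ ih1 ih2 =>
      simp only [bval] at ih1
      rcases Bool.or_eq_true_iff.mp ih1 with h | h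
      · rw [ih2] at h; simp at h
      · exact h
  | nec _ ih => simpa [bval] using ih

theorem Wcan_nonempty : ∃ Δ : Set Form, Δ ∈ Wcan := by
  have h0 : ¬ DerivDmbC ∅ (Form.var 0) := by
    rintro (h | ⟨γ, l, hm, _⟩)
    · have := bval_sound h
      simp [bval] at this
    · exact absurd (hm γ (by simp)) (Set.notMem_empty _)
  obtain ⟨Δ, _, hs⟩ := lindenbaum h0
  exact ⟨Δ, Form.var 0, hs⟩

/- Canonical valuation coordinates -/

theorem canVal_p1 (Δ : Set Form) (α : Form) : (canVal Δ α).p1 = true ↔ α ∈ Δ := by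
  by_cases h1 : α ∈ Δ <;> by_cases h2 : α.neg ∈ Δ <;>
    simp [canVal, h1, h2, SV.p1]

theorem canVal_p2 (Δ : Set Form) (α : Form) :
    (canVal Δ α).p2 = true ↔ (α ∉ Δ ∨ α.neg ∈ Δ) := by
  by_cases h1 : α ∈ Δ <;> by_cases h2 : α.neg ∈ Δ <;>
    simp [canVal, h1, h2, SV.p2]

theorem canVal_p1_false (Δ : Set Form) (α : Form) :
    (canVal Δ α).p1 = false ↔ α ∉ Δ := by
  rw [Bool.eq_false_iff, Ne, canVal_p1]

end Aux

/-- The canonical structure ⟨W_can, R_can, {v_Δ}⟩ is a swap Kripke model for DmbC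
(with W_can nonempty), and satisfies the truth lemma: v_Δ(φ) ∈ D iff φ ∈ Δ. -/
theorem canonical_model_DmbC :
    Nonempty {Δ : Set Form // Δ ∈ Wcan} ∧
    IsModelDmbC (W := {Δ : Set Form // Δ ∈ Wcan})
      (fun Δ Θ => Rcan Δ.1 Θ.1) (fun Δ α => canVal Δ.1 α) ∧
    ∀ (Δ : {Δ : Set Form // Δ ∈ Wcan}) (φ : Form), ((canVal Δ.1 φ).desig ↔ φ ∈ Δ.1) := by
  obtain ⟨Δ0, hΔ0⟩ := Wcan_nonempty
  refine ⟨⟨⟨Δ0, hΔ0⟩⟩, ⟨?_, ?_, ?_, ?_, ?_, ?_, ?_⟩, ?_⟩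
  · -- seriality
    intro w
    obtain ⟨ψ, hψ⟩ := w.2
    have hnd : ¬ DerivDmbC {φ : Form | φ.obl ∈ w.1} ψ.bot := by
      intro hd
      have h1 : (Form.bot ψ).obl ∈ w.1 := hψ.obl_of_den_deriv hd
      have h2 : Form.bot ψ ∈ w.1 := hψ.mp_mem (hψ.thm_mem (.OE ψ)) h1
      have h2' : (ψ.and ψ.neg).and ψ.circ ∈ w.1 := h2
      have h3 : ψ ∈ w.1 := (hψ.and_mem_iff.1 (hψ.and_mem_iff.1 h2').1).1
      exact hψ.1 (deriv_of_mem h3)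
    obtain ⟨Θ, hsub, hsat⟩ := lindenbaum hnd
    exact ⟨⟨Θ, ψ.bot, hsat⟩, fun φ hφ => hsub hφ⟩
  · -- and
    intro w α β
    obtain ⟨ψ, hψ⟩ := w.2
    rw [Bool.eq_iff_iff]
    simp only [Bool.and_eq_true, canVal_p1]
    exact hψ.and_mem_iff
  · -- or
    intro w α β
    obtain ⟨ψ, hψ⟩ := w.2
    rw [Bool.eq_iff_iff]
    simp only [Bool.or_eq_true_iff, canVal_p1]
    exact hψ.or_mem_iff
  · -- imp
    intro w α β
    obtain ⟨ψ, hψ⟩ := w.2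
    rw [Bool.eq_iff_iff]
    simp only [Bool.or_eq_true_iff, Bool.not_eq_true', canVal_p1, canVal_p1_false]
    exact hψ.imp_mem_iff
  · -- neg
    intro w α
    obtain ⟨ψ, hψ⟩ := w.2
    rw [Bool.eq_iff_iff, canVal_p1, canVal_p2]
    constructor
    · exact fun h => Or.inr h
    · rintro (h | h)
      · exact hψ.neg_mem_of_not_mem h
      · exact h
  · -- circ
    intro w α
    obtain ⟨ψ, hψ⟩ := w.2
    by_cases hc : α.circ ∈ w.1
    · cases hb1 : (canVal w.1 α).p1 <;> cases hb2 : (canVal w.1 α).p2 <;>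
        simp only [Bool.and_false, Bool.false_and, Bool.and_true, Bool.true_and,
          Bool.not_false, Bool.not_true]
      · exact Bool.le_true _
      · exact Bool.le_true _
      · exact Bool.le_true _
      · exfalso
        have ha : α ∈ w.1 := (canVal_p1 _ _).1 hb1
        rcases (canVal_p2 _ _).1 hb2 with h | h
        · exact h ha
        · exact hψ.circ_nc hc ha h
    · have h0 : (canVal w.1 α.circ).p1 = false := (canVal_p1_false _ _).2 hc
      rw [h0]
      exact Bool.false_le _
  · -- obl
    intro w α
    rw [canVal_p1]
    constructor
    · intro hm Θ hR
      exact (canVal_p1 _ _).2 (hR α hm)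
    · intro hall
      by_contra hno
      obtain ⟨ψ, hψ⟩ := w.2
      have hnd : ¬ DerivDmbC {φ : Form | φ.obl ∈ w.1} α :=
        fun hd => hno (hψ.obl_of_den_deriv hd)
      obtain ⟨Θ, hsub, hsat⟩ := lindenbaum hnd
      have hαΘ : α ∉ Θ := fun hm => hsat.1 (deriv_of_mem hm)
      have hval := hall ⟨Θ, α, hsat⟩ (fun φ hφ => hsub hφ)
      exact hαΘ ((canVal_p1 _ _).1 hval)
  · -- truth lemma
    intro Δ φ
    exact canVal_p1 Δ.1 φ
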